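/- Let f₀, f₁, ..., f_m : X → ℝ, let π* be a maximizer of f₀ subject to fᵢ(x) ≥ cᵢ for all i, and let λ* ∈ ℝ₊^m be an optimal dual variable with strong duality: f₀(π*) = L(π*, λ*) = max_x L(x, λ*), where L(x, λ) = f₀(x) + Σᵢ λᵢ(fᵢ(x) - cᵢ). Suppose a point x̃ ∈ X and σ ≥ 0 satisfy f₀(π*) - f₀(x̃) + ⟨λ, (c - f(x̃))₊⟩ ≤ σ for some λ ∈ ℝ₊^m with λ ⪰ λ* + B·𝟏 (entrywise), where B > 0. Then ‖(c - f(x̃))₊‖₁ ≤ σ/B. -/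
import Mathlib


theorem stmt_12 {X : Type*} {m : ℕ}
    (f0 : X → ℝ) (f : X → Fin m → ℝ) (c : Fin m → ℝ)
    (pistar xtilde : X) (lamstar lam : Fin m → ℝ) (σ B : ℝ)
    (hfeas : ∀ i, c i ≤ f pistar i)
    (hmax : ∀ x : X, (∀ i, c i ≤ f x i) → f0 x ≤ f0 pistar)
    (hlamstar_nn : ∀ i, 0 ≤ lamstar i)
    -- strong duality: f₀(π*) = L(π*, λ*) = max_x L(x, λ*)
    (hsd : f0 pistar = f0 pistar + ∑ i, lamstar i * (f pistar i - c i))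
    (hLmax : ∀ x : X,
      f0 x + ∑ i, lamstar i * (f x i - c i) ≤ f0 pistar + ∑ i, lamstar i * (f pistar i - c i))
    (hσ : 0 ≤ σ) (hB : 0 < B)
    (hlam_ge : ∀ i, lamstar i + B ≤ lam i)
    (hgap : f0 pistar - f0 xtilde + ∑ i, lam i * max (c i - f xtilde i) 0 ≤ σ) :
    ∑ i, max (c i - f xtilde i) 0 ≤ σ / B := by
  have h1 : f0 xtilde + ∑ i, lamstar i * (f xtilde i - c i) ≤ f0 pistar := by
    have := hLmax xtilde
    linarith [hsd]
  have h2 : ∀ i, -(lamstar i * max (c i - f xtilde i) 0) ≤ lamstar i * (f xtilde i - c i) := by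
    intro i
    have := hlamstar_nn i
    have h := le_max_left (c i - f xtilde i) 0
    nlinarith
  have h3 : -(∑ i, lamstar i * max (c i - f xtilde i) 0) ≤ ∑ i, lamstar i * (f xtilde i - c i) := by
    rw [← Finset.sum_neg_distrib]
    exact Finset.sum_le_sum fun i _ => h2 i
  have h4 : ∑ i, (lam i - lamstar i) * max (c i - f xtilde i) 0 ≤ σ := by
    have : ∑ i, (lam i - lamstar i) * max (c i - f xtilde i) 0
        = ∑ i, lam i * max (c i - f xtilde i) 0 - ∑ i, lamstar i * max (c i - f xtilde i) 0 := by
      rw [← Finset.sum_sub_distrib]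
      congr 1; ext i; ring
    linarith
  have h5 : ∑ i, B * max (c i - f xtilde i) 0 ≤ ∑ i, (lam i - lamstar i) * max (c i - f xtilde i) 0 := by
    apply Finset.sum_le_sum
    intro i _
    have := hlam_ge i
    have := le_max_right (c i - f xtilde i) 0
    nlinarith
  rw [← Finset.mul_sum] at h5
  rw [le_div_iff₀ hB]
  linarith
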